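/- Let σ ∈ S_n with σ(i) ≠ i for all i, and a, c_1, ..., c_n > 0. The map Θ(X) = diag(a x_{11} + c_1 x_{σ(1)σ(1)}, ..., a x_{nn} + c_n x_{σ(n)σ(n)}) - X on M_n is completely positive if and only if a ≥ n. -/

import Mathlib

open Finset Matrix
open scoped Kronecker ComplexOrder

/-- The map `Θ^{(n,σ)}[a; c₁,…,c_n]` on `n × n` complex matrices. -/
def ThetaMap (n : ℕ) (σ : Equiv.Perm (Fin n)) (a : ℝ) (c : Fin n → ℝ)
    (X : Matrix (Fin n) (Fin n) ℂ) : Matrix (Fin n) (Fin n) ℂ :=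
  Matrix.diagonal (fun i => (a : ℂ) * X i i + (c i : ℂ) * X (σ i) (σ i)) - X

/-- A linear map on `M_n` is completely positive iff its Choi matrix is positive
semidefinite (Choi's theorem); we take this as the definition. -/
def IsCompletelyPositive (n : ℕ) (φ : Matrix (Fin n) (Fin n) ℂ → Matrix (Fin n) (Fin n) ℂ) :
    Prop :=
  (∑ i, ∑ j, (Matrix.single i j (1 : ℂ)) ⊗ₖ
    φ (Matrix.single i j (1 : ℂ))).PosSemidef

section Aux

variable (n : ℕ) (σ : Equiv.Perm (Fin n)) (a : ℝ) (c : Fin n → ℝ)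

/-- The entangled (unnormalised) vector `∑ eₖ ⊗ eₖ` as a 0/1 indicator. -/
noncomputable def omegaVec : Fin n × Fin n → ℂ := fun p => if p.1 = p.2 then 1 else 0

/-- Diagonal of the Choi matrix. -/
noncomputable def dVec : Fin n × Fin n → ℂ :=
  fun p => (if p.1 = p.2 then (a : ℂ) else 0) + (if p.1 = σ p.2 then (c p.2 : ℂ) else 0)

lemma choi_eq :
    (∑ i, ∑ j, (Matrix.single i j (1 : ℂ)) ⊗ₖ
        ThetaMap n σ a c (Matrix.single i j (1 : ℂ)))
      = Matrix.diagonal (dVec n σ a c) - Matrix.vecMulVec (omegaVec n) (omegaVec n) := by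
  ext ⟨i, k⟩ ⟨j, l⟩
  simp [ThetaMap, dVec, omegaVec, Matrix.sum_apply, Matrix.kroneckerMap_apply, Matrix.sub_apply,
    Matrix.diagonal_apply, Matrix.single, Matrix.vecMulVec_apply, Prod.ext_iff,
    mul_ite, ite_and, Finset.sum_ite_eq]
  by_cases hkl : k = l
  · subst hkl
    by_cases hij : i = j
    · subst hij; simp; split_ifs <;> ring
    · have h1 : ¬(i = k ∧ j = k) := fun ⟨h, h'⟩ => hij (h.trans h'.symm)
      have h2 : ¬(i = σ k ∧ j = σ k) := fun ⟨h, h'⟩ => hij (h.trans h'.symm)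
      simp only [if_pos rfl, if_neg hij]
      split_ifs <;> (try ring) <;> tauto
  · simp [hkl]
    split_ifs <;> (try ring) <;> tauto

lemma sum_omega_mul (x : Fin n × Fin n → ℂ) :
    ∑ q, omegaVec n q * x q = ∑ k, x (k, k) := by
  rw [Fintype.sum_prod_type]
  rw [Finset.sum_comm]
  refine Finset.sum_congr rfl fun k _ => ?_
  simp [omegaVec, ite_mul, Finset.sum_ite_eq]

lemma quad_form (x : Fin n × Fin n → ℂ) :
    star x ⬝ᵥ (Matrix.diagonal (dVec n σ a c) - Matrix.vecMulVec (omegaVec n) (omegaVec n)) *ᵥ x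
      = ((∑ p : Fin n × Fin n,
            ((if p.1 = p.2 then a else 0) + (if p.1 = σ p.2 then c p.2 else 0))
              * Complex.normSq (x p)
          - Complex.normSq (∑ k, x (k, k)) : ℝ) : ℂ) := by
  rw [Matrix.sub_mulVec, dotProduct_sub]
  have hdiag : star x ⬝ᵥ (Matrix.diagonal (dVec n σ a c) *ᵥ x)
      = ∑ p : Fin n × Fin n, dVec n σ a c p * (Complex.normSq (x p) : ℂ) := by
    simp only [dotProduct, Matrix.mulVec_diagonal, Pi.star_apply, RCLike.star_def]
    refine Finset.sum_congr rfl fun p _ => ?_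
    rw [Complex.normSq_eq_conj_mul_self]
    ring
  have houter : star x ⬝ᵥ (Matrix.vecMulVec (omegaVec n) (omegaVec n) *ᵥ x)
      = (Complex.normSq (∑ k, x (k, k)) : ℂ) := by
    have hmv : Matrix.vecMulVec (omegaVec n) (omegaVec n) *ᵥ x
        = fun p => omegaVec n p * ∑ k, x (k, k) := by
      funext p
      simp only [Matrix.mulVec, Matrix.vecMulVec_apply, dotProduct]
      rw [← sum_omega_mul n x, Finset.mul_sum]
      exact Finset.sum_congr rfl fun q _ => by ring
    rw [hmv]
    simp only [dotProduct, Pi.star_apply]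
    have hsplit : (∑ p : Fin n × Fin n, star (x p) * (omegaVec n p * ∑ k, x (k, k)))
        = (∑ p : Fin n × Fin n, omegaVec n p * star (x p)) * ∑ k, x (k, k) := by
      rw [Finset.sum_mul]
      exact Finset.sum_congr rfl fun p _ => by ring
    rw [hsplit, sum_omega_mul n (fun p => star (x p))]
    have : (∑ k : Fin n, star (x (k, k))) = star (∑ k : Fin n, x (k, k)) := by
      simp
    rw [this, RCLike.star_def, ← Complex.normSq_eq_conj_mul_self]
  rw [hdiag, houter, Complex.ofReal_sub, Complex.ofReal_sum]
  congr 1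
  refine Finset.sum_congr rfl fun p _ => ?_
  simp [dVec, apply_ite Complex.ofReal]

end Aux

theorem stmt11 (n : ℕ) (hn : 0 < n) (σ : Equiv.Perm (Fin n)) (hσ : ∀ i, σ i ≠ i)
    (a : ℝ) (c : Fin n → ℝ) (ha0 : 0 < a) (hc : ∀ i, 0 < c i) :
    IsCompletelyPositive n (ThetaMap n σ a c) ↔ (n : ℝ) ≤ a := by
  rw [IsCompletelyPositive, choi_eq n σ a c]
  constructor
  · intro h
    have h0 := h.dotProduct_mulVec_nonneg (omegaVec n)
    rw [quad_form, Complex.zero_le_real] at h0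
    have hsum : ∑ p : Fin n × Fin n,
        ((if p.1 = p.2 then a else 0) + (if p.1 = σ p.2 then c p.2 else 0))
          * Complex.normSq (omegaVec n p) = (n : ℝ) * a := by
      rw [Fintype.sum_prod_type, Finset.sum_comm]
      have hterm : ∀ k : Fin n,
          (∑ i : Fin n, ((if i = k then a else 0) + (if i = σ k then c k else 0))
            * Complex.normSq (omegaVec n (i, k))) = a := by
        intro k
        have : ∀ i : Fin n, ((if i = k then a else 0) + (if i = σ k then c k else 0))
            * Complex.normSq (omegaVec n (i, k)) = if i = k then a else 0 := by
          intro i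
          by_cases h : i = k
          · subst h
            have hik : ¬ i = σ i := fun hh => (hσ i) hh.symm
            simp [omegaVec, hik]
          · simp [omegaVec, h]
        rw [Finset.sum_congr rfl fun i _ => this i]
        simp
      rw [Finset.sum_congr rfl fun k _ => hterm k]
      simp [mul_comm]
    have hS : (∑ k : Fin n, omegaVec n (k, k)) = ((n : ℝ) : ℂ) := by
      simp [omegaVec]
    rw [hsum, hS] at h0
    have hnsq : Complex.normSq ((n : ℝ) : ℂ) = (n : ℝ) * (n : ℝ) := Complex.normSq_ofReal _
    rw [hnsq] at h0
    have hn' : (0 : ℝ) < (n : ℝ) := by exact_mod_cast hn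
    nlinarith
  · intro hna
    have hdH : (Matrix.diagonal (dVec n σ a c)).IsHermitian := by
      rw [Matrix.isHermitian_diagonal_iff]
      intro p
      rw [isSelfAdjoint_iff]
      simp [dVec, apply_ite (starRingEnd ℂ), Complex.conj_ofReal]
    have hwH : (Matrix.vecMulVec (omegaVec n) (omegaVec n)).IsHermitian := by
      rw [Matrix.IsHermitian]
      ext p q
      simp only [Matrix.conjTranspose_apply, Matrix.vecMulVec_apply, omegaVec, star_mul']
      split_ifs <;> simp
    refine Matrix.PosSemidef.of_dotProduct_mulVec_nonneg (hdH.sub hwH) fun x => ?_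
    rw [quad_form, Complex.zero_le_real]
    have habs : ‖∑ k : Fin n, x (k, k)‖ ≤ ∑ k : Fin n, ‖x (k, k)‖ :=
      norm_sum_le _ _
    have hcs : (∑ k : Fin n, ‖x (k, k)‖) ^ 2
        ≤ (n : ℝ) * ∑ k : Fin n, ‖x (k, k)‖ ^ 2 := by
      simpa using sq_sum_le_card_mul_sum_sq (s := Finset.univ)
        (f := fun k : Fin n => ‖x (k, k)‖)
    have hnormSqS : Complex.normSq (∑ k : Fin n, x (k, k))
        ≤ (n : ℝ) * ∑ k : Fin n, Complex.normSq (x (k, k)) := by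
      calc Complex.normSq (∑ k : Fin n, x (k, k))
          = ‖∑ k : Fin n, x (k, k)‖ ^ 2 := (Complex.sq_norm _).symm
        _ ≤ (∑ k : Fin n, ‖x (k, k)‖) ^ 2 := by
            exact pow_le_pow_left₀ (norm_nonneg _) habs 2
        _ ≤ (n : ℝ) * ∑ k : Fin n, ‖x (k, k)‖ ^ 2 := hcs
        _ = (n : ℝ) * ∑ k : Fin n, Complex.normSq (x (k, k)) := by
            simp [Complex.sq_norm]
    have e1 : ∑ p : Fin n × Fin n, (if p.1 = p.2 then a else 0) * Complex.normSq (x p)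
        = a * ∑ k : Fin n, Complex.normSq (x (k, k)) := by
      rw [Fintype.sum_prod_type, Finset.sum_comm, Finset.mul_sum]
      refine Finset.sum_congr rfl fun k _ => ?_
      simp [ite_mul, Finset.sum_ite_eq]
    have e2 : (0:ℝ) ≤ ∑ p : Fin n × Fin n, (if p.1 = σ p.2 then c p.2 else 0) * Complex.normSq (x p) := by
      refine Finset.sum_nonneg fun p _ => mul_nonneg ?_ (Complex.normSq_nonneg _)
      split_ifs
      · exact (hc p.2).le
      · exact le_refl 0
    have hsplit : ∑ p : Fin n × Fin n,
        ((if p.1 = p.2 then a else 0) + (if p.1 = σ p.2 then c p.2 else 0)) * Complex.normSq (x p)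
        = (∑ p : Fin n × Fin n, (if p.1 = p.2 then a else 0) * Complex.normSq (x p))
          + ∑ p : Fin n × Fin n, (if p.1 = σ p.2 then c p.2 else 0) * Complex.normSq (x p) := by
      rw [← Finset.sum_add_distrib]
      exact Finset.sum_congr rfl fun p _ => by ring
    have hlow : (n : ℝ) * ∑ k : Fin n, Complex.normSq (x (k, k))
        ≤ a * ∑ k : Fin n, Complex.normSq (x (k, k)) :=
      mul_le_mul_of_nonneg_right hna (Finset.sum_nonneg fun k _ => Complex.normSq_nonneg _)
    rw [hsplit, e1]
    linarith
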